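/- Let G be a connected finite simple graph with a split between A and B, and let τ be a circle representation of G. Let γ_1, …, γ_{2k} be the maximal A- and B-subwords of the circular subsequence γ of τ induced by A ∪ B. Then each subword γ_i contains each vertex at most once. -/

import Mathlib

/-- The segment of the word `τ` strictly between the two occurrences of `u`. -/
def betweenOccs {V : Type*} [DecidableEq V] (τ : List V) (u : V) : List V :=
  ((τ.dropWhile (fun x => decide (x ≠ u))).drop 1).takeWhile (fun x => decide (x ≠ u))

/-- Two symbols `u` and `v` alternate in the circular word `τ` (i.e. their four
occurrences appear in cyclic order `u, v, u, v`): exactly one of the two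
occurrences of `v` lies strictly between the two occurrences of `u`. -/
def Alternates {V : Type*} [DecidableEq V] (τ : List V) (u v : V) : Prop :=
  (betweenOccs τ u).count v = 1

/-- `τ` is a circle representation of `G`: a circular word (modelled as a list read
cyclically) in which every vertex occurs exactly twice, and two distinct vertices are
adjacent iff their occurrences alternate. -/
def IsCircleRep {V : Type*} [DecidableEq V] (G : SimpleGraph V) (τ : List V) : Prop :=
  (∀ v : V, τ.count v = 2) ∧
  ∀ u v : V, u ≠ v → (G.Adj u v ↔ Alternates τ u v)

/-- A split of `G` between `A` and `B`, with short sides `SA = 𝔰(A)` and `SB = 𝔰(B)`: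
a partition of the vertices into four parts such that every vertex of `A` is adjacent
to every vertex of `B`, there are no edges between `SA` and `B ∪ SB` nor between
`SB` and `A ∪ SA`, and both sides have at least two vertices. -/
def IsSplit {V : Type*} [DecidableEq V] (G : SimpleGraph V) (A B SA SB : Finset V) : Prop :=
  (∀ v : V, v ∈ A ∪ B ∪ SA ∪ SB) ∧
  Disjoint A B ∧ Disjoint A SA ∧ Disjoint A SB ∧
  Disjoint B SA ∧ Disjoint B SB ∧ Disjoint SA SB ∧
  (∀ a ∈ A, ∀ b ∈ B, G.Adj a b) ∧
  (∀ s ∈ SA, ∀ x ∈ B ∪ SB, ¬ G.Adj s x) ∧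
  (∀ s ∈ SB, ∀ x ∈ A ∪ SA, ¬ G.Adj s x) ∧
  2 ≤ (A ∪ SA).card ∧ 2 ≤ (B ∪ SB).card

section Helpers
open List
variable {V : Type*} [DecidableEq V]

lemma count_one_decomp {x : V} : ∀ {l : List V}, l.count x = 1 →
    ∃ m s, l = m ++ x :: s ∧ x ∉ m ∧ x ∉ s := by
  intro l
  induction l with
  | nil => simp
  | cons a t ih =>
    intro h
    by_cases hax : a = x
    · subst hax
      rw [List.count_cons_self] at h
      have ht : a ∉ t := by rw [← List.count_eq_zero]; omega
      exact ⟨[], t, by simp, by simp, ht⟩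
    · rw [List.count_cons_of_ne hax] at h
      obtain ⟨m, s, rfl, hm, hs⟩ := ih h
      refine ⟨a :: m, s, by simp, ?_, hs⟩
      simp only [List.mem_cons, not_or]
      exact ⟨fun e => hax e.symm, hm⟩

lemma count_two_decomp {x : V} : ∀ {l : List V}, l.count x = 2 →
    ∃ p m s, l = p ++ x :: (m ++ x :: s) ∧ x ∉ p ∧ x ∉ m ∧ x ∉ s := by
  intro l
  induction l with
  | nil => simp
  | cons a t ih =>
    intro h
    by_cases hax : a = x
    · subst hax
      rw [List.count_cons_self] at h
      obtain ⟨m, s, rfl, hm, hs⟩ := count_one_decomp (show t.count a = 1 by omega)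
      exact ⟨[], m, s, by simp, by simp, hm, hs⟩
    · rw [List.count_cons_of_ne hax] at h
      obtain ⟨p, m, s, rfl, hp, hm, hs⟩ := ih h
      refine ⟨a :: p, m, s, by simp, ?_, hm, hs⟩
      simp only [List.mem_cons, not_or]
      exact ⟨fun e => hax e.symm, hp⟩

lemma dropWhile_ne_nil {x : V} {p : List V} (hp : x ∉ p) :
    List.dropWhile (fun y => decide (y ≠ x)) p = [] := by
  rw [List.dropWhile_eq_nil_iff]
  intro y hy
  simp only [ne_eq, decide_not, Bool.not_eq_true', decide_eq_false_iff_not, not_not] at *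
  exact fun e => hp (e ▸ hy)

lemma takeWhile_ne_of_not_mem {x : V} {m : List V} (hm : x ∉ m) (s : List V) :
    List.takeWhile (fun y => decide (y ≠ x)) (m ++ x :: s) = m := by
  rw [List.takeWhile_append]
  have : List.takeWhile (fun y => decide (y ≠ x)) m = m := by
    rw [List.takeWhile_eq_self_iff]
    intro y hy
    simp only [ne_eq, decide_eq_true_eq]
    exact fun e => hm (e ▸ hy)
  rw [this]
  simp [List.takeWhile_cons]

lemma betweenOccs_eq {x : V} {p m s : List V} (hp : x ∉ p) (hm : x ∉ m) :
    betweenOccs (p ++ x :: (m ++ x :: s)) x = m := by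
  unfold betweenOccs
  rw [List.dropWhile_append, dropWhile_ne_nil hp]
  simp only [List.isEmpty_nil, if_true]
  rw [List.dropWhile_cons]
  simp only [ne_eq, not_true_eq_false, decide_false, if_false, List.drop_one,
    List.tail_cons]
  exact takeWhile_ne_of_not_mem hm s

lemma step_rotate {x v : V} (hvx : v ≠ x) (a : V) (t : List V)
    (hx : (a :: t).count x = 2) (hv : (a :: t).count v = 2) :
    ((betweenOccs (t ++ [a]) x).count v = 1 ↔ (betweenOccs (a :: t) x).count v = 1) := by
  by_cases hax : a = x
  · subst hax
    rw [List.count_cons_self] at hx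
    obtain ⟨m, s, rfl, hm, hs⟩ := count_one_decomp (show t.count a = 1 by omega)
    have h1 : betweenOccs (a :: (m ++ a :: s)) a = m := by
      simpa using betweenOccs_eq (List.not_mem_nil (a := a)) hm (s := s)
    have h2 : betweenOccs ((m ++ a :: s) ++ [a]) a = s := by
      have : (m ++ a :: s) ++ [a] = m ++ a :: (s ++ a :: []) := by simp
      rw [this]
      exact betweenOccs_eq hm hs
    rw [h1, h2]
    have hsum : m.count v + s.count v = 2 := by
      have := hv
      rw [List.count_cons_of_ne (Ne.symm hvx), List.count_append, List.count_cons_of_ne (Ne.symm hvx)] at this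
      omega
    omega
  · rw [List.count_cons_of_ne hax] at hx
    obtain ⟨p, m, s, rfl, hp, hm, hs⟩ := count_two_decomp hx
    have h1 : betweenOccs (a :: (p ++ x :: (m ++ x :: s))) x = m := by
      have : a :: (p ++ x :: (m ++ x :: s)) = (a :: p) ++ x :: (m ++ x :: s) := by simp
      rw [this]
      refine betweenOccs_eq ?_ hm
      simp only [List.mem_cons, not_or]
      exact ⟨fun e => hax e.symm, hp⟩
    have h2 : betweenOccs ((p ++ x :: (m ++ x :: s)) ++ [a]) x = m := by
      have : (p ++ x :: (m ++ x :: s)) ++ [a] = p ++ x :: (m ++ x :: (s ++ [a])) := by simp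
      rw [this]
      exact betweenOccs_eq hp hm
    rw [h1, h2]

lemma count_between_rotate {x v : V} (hvx : v ≠ x) :
    ∀ (n : ℕ) (l : List V), l.count x = 2 → l.count v = 2 →
      ((betweenOccs (l.rotate n) x).count v = 1 ↔ (betweenOccs l x).count v = 1) := by
  intro n
  induction n with
  | zero => intro l _ _; rw [List.rotate_zero]
  | succ n ih =>
    intro l hx hv
    cases l with
    | nil => simp at hx
    | cons a t =>
      rw [List.rotate_cons_succ]
      rw [ih (t ++ [a]) (by rw [List.count_append]; simpa [List.count_cons] using hx)
        (by rw [List.count_append]; simpa [List.count_cons] using hv)]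
      exact step_rotate hvx a t hx hv

lemma betweenOccs_filter {x : V} {P : V → Bool} (hPx : P x = true) {τ : List V}
    (hx : τ.count x = 2) :
    betweenOccs (τ.filter P) x = (betweenOccs τ x).filter P := by
  obtain ⟨p, m, s, rfl, hp, hm, hs⟩ := count_two_decomp hx
  rw [betweenOccs_eq hp hm]
  have : (p ++ x :: (m ++ x :: s)).filter P
      = p.filter P ++ x :: (m.filter P ++ x :: s.filter P) := by
    simp [List.filter_append, List.filter_cons, hPx]
  rw [this, betweenOccs_eq (fun h => hp (List.mem_of_mem_filter h))
    (fun h => hm (List.mem_of_mem_filter h))]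

lemma walk_closed {G : SimpleGraph V} {S : Set V}
    (hcl : ∀ u ∈ S, ∀ w, G.Adj u w → w ∈ S) :
    ∀ {a b : V} (_ : G.Walk a b), a ∈ S → b ∈ S := by
  intro a b p
  induction p with
  | nil => exact id
  | cons h _ ih => intro ha; exact ih (hcl _ ha _ h)



end Helpers

/-- Lemma (group ordering, part (a)): in any circle representation `τ` of a connected
graph `G` with a split between `A` and `B`, each maximal `A`- or `B`-subword
`γ i` of the circular subsequence of `τ` induced by `A ∪ B` contains each vertex
at most once. -/
theorem each_subword_contains_each_symbol_at_most_once
    {V : Type*} [DecidableEq V] [Fintype V]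
    (G : SimpleGraph V) (hconn : G.Connected)
    (A B SA SB : Finset V) (hsplit : IsSplit G A B SA SB)
    (τ : List V) (hτ : IsCircleRep G τ)
    (k : ℕ) (γ : ℕ → List V)
    (hjoin : ((List.range (2 * k)).map γ).flatten ~r
      τ.filter (fun x => decide (x ∈ A ∪ B)))
    (hne : ∀ i < 2 * k, γ i ≠ [])
    (hAword : ∀ i < 2 * k, i % 2 = 0 → ∀ x ∈ γ i, x ∈ A)
    (hBword : ∀ i < 2 * k, i % 2 = 1 → ∀ x ∈ γ i, x ∈ B) :
    ∀ i < 2 * k, ∀ x : V, (γ i).count x ≤ 1 := by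
  obtain ⟨hcover, hAB, hASA, hASB, hBSA, hBSB, hSASB, hadj, hSA, hSB, hcardA, hcardB⟩ := hsplit
  -- A is nonempty
  have hAne : A.Nonempty := by
    by_contra hA
    rw [Finset.not_nonempty_iff_eq_empty] at hA
    subst hA
    have hSAne : SA.Nonempty := by
      rw [← Finset.card_pos]
      have := hcardA; simp only [Finset.empty_union] at this; omega
    obtain ⟨s, hs⟩ := hSAne
    obtain ⟨y, hy⟩ : (B ∪ SB).Nonempty := by rw [← Finset.card_pos]; omega
    have hyS : y ∈ (↑SA : Set V) := by
      refine walk_closed (G := G) (S := ↑SA) ?_ (hconn s y).some hs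
      intro u hu w hw
      have hwall := hcover w
      simp only [Finset.mem_union, Finset.empty_union] at hwall
      rcases hwall with (hwB | hwSA) | hwSB
      · exact absurd hw (hSA u hu w (Finset.mem_union_left _ hwB))
      · exact hwSA
      · exact absurd hw (hSA u hu w (Finset.mem_union_right _ hwSB))
    simp only [Finset.mem_union] at hy
    rcases hy with hy | hy
    · exact (Finset.disjoint_left.mp hBSA hy) hyS
    · exact (Finset.disjoint_left.mp hSASB hyS) hy
  -- B is nonempty
  have hBne : B.Nonempty := by
    by_contra hB
    rw [Finset.not_nonempty_iff_eq_empty] at hB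
    subst hB
    have hSBne : SB.Nonempty := by
      rw [← Finset.card_pos]
      have := hcardB; simp only [Finset.empty_union] at this; omega
    obtain ⟨s, hs⟩ := hSBne
    obtain ⟨y, hy⟩ : (A ∪ SA).Nonempty := by rw [← Finset.card_pos]; omega
    have hyS : y ∈ (↑SB : Set V) := by
      refine walk_closed (G := G) (S := ↑SB) ?_ (hconn s y).some hs
      intro u hu w hw
      have hwall := hcover w
      simp only [Finset.mem_union, Finset.union_empty] at hwall
      rcases hwall with (hwA | hwSA) | hwSB
      · exact absurd hw (hSB u hu w (Finset.mem_union_left _ hwA))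
      · exact absurd hw (hSB u hu w (Finset.mem_union_right _ hwSA))
      · exact hwSB
    simp only [Finset.mem_union] at hy
    rcases hy with hy | hy
    · exact (Finset.disjoint_left.mp hASB hy) hyS
    · exact (Finset.disjoint_left.mp hSASB hy) hyS
  intro i hi x
  by_contra hcount
  push_neg at hcount
  have hx2 : 2 ≤ (γ i).count x := hcount
  have hxmem : x ∈ γ i := by
    rw [← List.count_pos_iff]; omega
  set P : V → Bool := fun y => decide (y ∈ A ∪ B) with hP
  set ρ : List V := τ.filter P with hρ
  set F : List V := ((List.range (2 * k)).map γ).flatten with hF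
  -- x is in A ∪ B and there is a suitable b
  obtain ⟨hxAB, b, hadjxb, hxb, hbAB, hbγ⟩ :
      x ∈ A ∪ B ∧ ∃ b, G.Adj x b ∧ x ≠ b ∧ b ∈ A ∪ B ∧ ∀ y ∈ γ i, y ≠ b := by
    rcases Nat.even_or_odd i with he | ho
    · have hxA : x ∈ A := hAword i hi (Nat.even_iff.mp he) x hxmem
      obtain ⟨b, hb⟩ := hBne
      refine ⟨Finset.mem_union_left _ hxA, b, hadj x hxA b hb, ?_,
        Finset.mem_union_right _ hb, ?_⟩
      · intro e; exact (Finset.disjoint_left.mp hAB hxA) (e ▸ hb)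
      · intro y hy e
        exact (Finset.disjoint_left.mp hAB (hAword i hi (Nat.even_iff.mp he) y hy)) (e ▸ hb)
    · have hxB : x ∈ B := hBword i hi (Nat.odd_iff.mp ho) x hxmem
      obtain ⟨b, hb⟩ := hAne
      refine ⟨Finset.mem_union_right _ hxB, b, (hadj b hb x hxB).symm, ?_,
        Finset.mem_union_left _ hb, ?_⟩
      · intro e; exact (Finset.disjoint_left.mp hAB (e ▸ hb)) hxB
      · intro y hy e
        exact (Finset.disjoint_left.mp hAB (e ▸ hb)) (hBword i hi (Nat.odd_iff.mp ho) y hy)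
  have hPx : P x = true := by simp only [hP, decide_eq_true_eq]; exact hxAB
  have hPb : P b = true := by simp only [hP, decide_eq_true_eq]; exact hbAB
  -- counts
  have hcx : ρ.count x = 2 := by rw [hρ, List.count_filter hPx]; exact hτ.1 x
  have hcb : ρ.count b = 2 := by rw [hρ, List.count_filter hPb]; exact hτ.1 b
  have hFperm : F.Perm ρ := hjoin.perm
  have hcxF : F.count x = 2 := by rw [hFperm.count_eq]; exact hcx
  have hcbF : F.count b = 2 := by rw [hFperm.count_eq]; exact hcb
  -- decompose F around γ i
  have hFsplit : F = ((List.range i).map γ).flatten ++ γ i ++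
      (((List.range (2 * k - i - 1)).map (fun j => γ (i + 1 + j))).flatten) := by
    rw [hF]
    have h2k : 2 * k = i + 1 + (2 * k - i - 1) := by omega
    conv_lhs => rw [h2k, List.range_add, List.range_add]
    rw [show List.range 1 = [0] from rfl]
    simp [List.flatten_append, List.map_map, Function.comp_def]
  set F1 : List V := ((List.range i).map γ).flatten
  set F2 : List V := ((List.range (2 * k - i - 1)).map (fun j => γ (i + 1 + j))).flatten
  have hcsum : F1.count x + (γ i).count x + F2.count x = 2 := by
    have := hcxF
    rw [hFsplit, List.count_append, List.count_append] at this
    omega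
  have hγx2 : (γ i).count x = 2 := by omega
  have hxF1 : x ∉ F1 := by rw [← List.count_eq_zero]; omega
  obtain ⟨q, w, r, hγeq, hq, hw, hr⟩ := count_two_decomp hγx2
  have hFform : F = (F1 ++ q) ++ x :: (w ++ x :: (r ++ F2)) := by
    rw [hFsplit, hγeq]; simp
  have hbetF : betweenOccs F x = w := by
    rw [hFform]
    refine betweenOccs_eq ?_ hw
    simp only [List.mem_append, not_or]
    exact ⟨hxF1, hq⟩
  -- alternation gives count 1
  have halt : (betweenOccs τ x).count b = 1 := (hτ.2 x b hxb).mp hadjxb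
  have hbρ : (betweenOccs ρ x).count b = 1 := by
    rw [hρ, betweenOccs_filter hPx (hτ.1 x), List.count_filter hPb]
    exact halt
  obtain ⟨n, hn⟩ := hjoin
  have hbF : (betweenOccs F x).count b = 1 := by
    rw [← count_between_rotate (Ne.symm hxb) n F hcxF hcbF, hn]
    exact hbρ
  rw [hbetF] at hbF
  have hbw : b ∉ w := by
    intro hbw
    have : b ∈ γ i := by rw [hγeq]; simp [hbw]
    exact hbγ b this rfl
  rw [List.count_eq_zero_of_not_mem hbw] at hbF
  exact one_ne_zero hbF.symm
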